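/- Let R be a commutative ring, K ≥ 1 an integer, and A a K×K matrix over R with zero diagonal (A_{ii} = 0 for all i). Then det A = Σ_π Π_{B ∈ π} ( (−1)^{|B|+1} Σ_σ Π_{i ∈ B} A_{i, σ(i)} ), where the outer sum is over all set partitions π of {1,…,K} all of whose blocks have at least two elements, and for each block B the inner sum is over all permutations σ of B that are cyclic on B. -/

import Mathlib

open scoped Classical

open Equiv Equiv.Perm Finset

section Aux
variable {α : Type*} [Fintype α] [DecidableEq α]

lemma DCA.noncommProd_apply_eq {ι : Type*} {s : Finset ι} {k : ι → Equiv.Perm α}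
    (hs : (s : Set ι).Pairwise fun i j => (k i).Disjoint (k j)) (comm) {i : ι} (hi : i ∈ s)
    {a : α} (ha : a ∈ (k i).support) :
    s.noncommProd k comm a = k i a := by
  rw [← Finset.mul_noncommProd_erase s hi k comm]
  have hsub : ((s.erase i : Finset ι) : Set ι).Pairwise fun i j => (k i).Disjoint (k j) :=
    hs.mono (by simpa using (Finset.erase_subset i s))
  have h1 : a ∉ ((s.erase i).noncommProd k
      (hsub.imp fun _ _ => Equiv.Perm.Disjoint.commute)).support := by
    rw [Equiv.Perm.support_noncommProd hsub]
    simp only [Finset.mem_biUnion, not_exists]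
    rintro j ⟨hj, hja⟩
    have hji : j ≠ i := Finset.ne_of_mem_erase hj
    have hd : (k j).Disjoint (k i) := hs (Finset.mem_of_mem_erase hj) hi hji
    rw [Equiv.Perm.disjoint_iff_disjoint_support] at hd
    exact (Finset.disjoint_left.mp hd hja) ha
  have h2 : ((s.erase i).noncommProd k
      (hsub.imp fun _ _ => Equiv.Perm.Disjoint.commute)) a = a :=
    Equiv.Perm.notMem_support.mp h1
  rw [Equiv.Perm.mul_apply]
  rw [show ((s.erase i).noncommProd k _) a = a from h2]

variable {P : Finset (Finset α)} {p : ∀ B ∈ P, Equiv.Perm α}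

lemma DCA.pair (hdisj : (P : Set (Finset α)).PairwiseDisjoint id)
    (hp : ∀ B (hB : B ∈ P), (p B hB).IsCycle ∧ (p B hB).support = B) :
    ((P.attach : Finset {B // B ∈ P}) : Set {B // B ∈ P}).Pairwise
      fun B C => (p B.1 B.2).Disjoint (p C.1 C.2) := by
  intro B _ C _ hne
  have h1 : B.1 ≠ C.1 := fun h => hne (Subtype.ext h)
  have hd : Disjoint B.1 C.1 := hdisj (Finset.mem_coe.mpr B.2) (Finset.mem_coe.mpr C.2) h1
  rw [Equiv.Perm.disjoint_iff_disjoint_support, (hp B.1 B.2).2, (hp C.1 C.2).2]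
  exact hd

lemma DCA.support_fwd (hdisj : (P : Set (Finset α)).PairwiseDisjoint id)
    (hp : ∀ B (hB : B ∈ P), (p B hB).IsCycle ∧ (p B hB).support = B) (comm) :
    (P.attach.noncommProd (fun B => p B.1 B.2) comm).support = P.biUnion id := by
  rw [Equiv.Perm.support_noncommProd (DCA.pair hdisj hp)]
  ext a
  simp only [Finset.mem_biUnion, Finset.mem_attach, true_and, Subtype.exists, id]
  constructor
  · rintro ⟨B, hB, ha⟩
    exact ⟨B, hB, by rwa [(hp B hB).2] at ha⟩
  · rintro ⟨B, hB, ha⟩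
    exact ⟨B, hB, by rwa [(hp B hB).2]⟩

lemma DCA.apply_fwd (hdisj : (P : Set (Finset α)).PairwiseDisjoint id)
    (hp : ∀ B (hB : B ∈ P), (p B hB).IsCycle ∧ (p B hB).support = B) (comm)
    {B : Finset α} (hB : B ∈ P) {a : α} (ha : a ∈ B) :
    (P.attach.noncommProd (fun B => p B.1 B.2) comm) a = p B hB a := by
  exact DCA.noncommProd_apply_eq (DCA.pair hdisj hp) comm (Finset.mem_attach _ ⟨B, hB⟩)
    (by rw [(hp B hB).2]; exact ha)

lemma DCA.mem_factors (hdisj : (P : Set (Finset α)).PairwiseDisjoint id)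
    (hp : ∀ B (hB : B ∈ P), (p B hB).IsCycle ∧ (p B hB).support = B) (comm)
    {B : Finset α} (hB : B ∈ P) :
    p B hB ∈ (P.attach.noncommProd (fun B => p B.1 B.2) comm).cycleFactorsFinset := by
  rw [Equiv.Perm.mem_cycleFactorsFinset_iff]
  refine ⟨(hp B hB).1, fun a ha => ?_⟩
  rw [(hp B hB).2] at ha
  exact (DCA.apply_fwd hdisj hp comm hB ha).symm

lemma DCA.factors_image (hdisj : (P : Set (Finset α)).PairwiseDisjoint id)
    (hp : ∀ B (hB : B ∈ P), (p B hB).IsCycle ∧ (p B hB).support = B) (comm) :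
    (P.attach.noncommProd (fun B => p B.1 B.2) comm).cycleFactorsFinset.image
      Equiv.Perm.support = P := by
  set σ := P.attach.noncommProd (fun B => p B.1 B.2) comm with hσ
  ext B
  simp only [Finset.mem_image]
  constructor
  · rintro ⟨c, hc, rfl⟩
    have hcyc : c.IsCycle := (Equiv.Perm.mem_cycleFactorsFinset_iff.mp hc).1
    obtain ⟨a, ha⟩ := hcyc.nonempty_support
    have haσ : a ∈ σ.support := Equiv.Perm.mem_cycleFactorsFinset_support_le hc ha
    rw [DCA.support_fwd hdisj hp comm, Finset.mem_biUnion] at haσ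
    obtain ⟨B', hB', haB'⟩ := haσ
    have h1 : p B' hB' ∈ σ.cycleFactorsFinset := DCA.mem_factors hdisj hp comm hB'
    have h2 : a ∈ (p B' hB').support := by rw [(hp B' hB').2]; exact haB'
    have : c = p B' hB' := by
      rw [Equiv.Perm.cycle_is_cycleOf ha hc, Equiv.Perm.cycle_is_cycleOf h2 h1]
    rw [this, (hp B' hB').2]
    exact hB'
  · intro hB
    exact ⟨p B hB, DCA.mem_factors hdisj hp comm hB, (hp B hB).2⟩

lemma DCA.noncommProd_eq_prod' {ι : Type*} {β : Type*} [CommMonoid β] (s : Finset ι)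
    (f : ι → β) (comm) : s.noncommProd f comm = s.prod f :=
  Finset.noncommProd_eq_prod s f

lemma DCA.sign_fwd {R : Type*} [CommRing R]
    (hdisj : (P : Set (Finset α)).PairwiseDisjoint id)
    (hp : ∀ B (hB : B ∈ P), (p B hB).IsCycle ∧ (p B hB).support = B) (comm) :
    ((Equiv.Perm.sign (P.attach.noncommProd (fun B => p B.1 B.2) comm) : ℤ) : R)
      = ∏ B ∈ P, (-1 : R) ^ (B.card + 1) := by
  have key : ((Int.castRingHom R).toMonoidHom.comp
      ((Units.coeHom ℤ).comp Equiv.Perm.sign))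
        (P.attach.noncommProd (fun B => p B.1 B.2) comm)
      = ∏ B ∈ P.attach, ((Int.castRingHom R).toMonoidHom.comp
      ((Units.coeHom ℤ).comp Equiv.Perm.sign)) (p B.1 B.2) := by
    exact (Finset.map_noncommProd _ _ _ _).trans (DCA.noncommProd_eq_prod' _ _ _)
  have key2 : ∀ (B : Finset α) (hB : B ∈ P),
      ((Int.castRingHom R).toMonoidHom.comp ((Units.coeHom ℤ).comp Equiv.Perm.sign))
        (p B hB) = (-1 : R) ^ (B.card + 1) := by
    intro B hB
    have h1 : Equiv.Perm.sign (p B hB) = -(-1) ^ (p B hB).support.card := (hp B hB).1.sign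
    have h2 : (p B hB).support.card = B.card := by rw [(hp B hB).2]
    simp only [MonoidHom.comp_apply, RingHom.toMonoidHom_eq_coe, MonoidHom.coe_coe,
      Units.coeHom_apply, h1, h2]
    rw [pow_succ]
    push_cast
    simp
  calc ((Equiv.Perm.sign (P.attach.noncommProd (fun B => p B.1 B.2) comm) : ℤ) : R)
      = ∏ B ∈ P.attach, ((Int.castRingHom R).toMonoidHom.comp
        ((Units.coeHom ℤ).comp Equiv.Perm.sign)) (p B.1 B.2) := key
    _ = ∏ B ∈ P.attach, (-1 : R) ^ (B.1.card + 1) := by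
        exact Finset.prod_congr rfl fun B _ => key2 B.1 B.2
    _ = ∏ B ∈ P, (-1 : R) ^ (B.card + 1) := by
        rw [Finset.prod_attach P (fun B => (-1 : R) ^ (B.card + 1))]

end Aux

section Inv
variable {K : ℕ}

lemma DCA.inv_nonempty {σ : Equiv.Perm (Fin K)} {B : Finset (Fin K)}
    (hB : B ∈ σ.cycleFactorsFinset.image Equiv.Perm.support) : B.Nonempty := by
  simp only [Finset.mem_image] at hB
  obtain ⟨c, hc, rfl⟩ := hB
  exact (Equiv.Perm.mem_cycleFactorsFinset_iff.mp hc).1.nonempty_support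

lemma DCA.inv_card {σ : Equiv.Perm (Fin K)} {B : Finset (Fin K)}
    (hB : B ∈ σ.cycleFactorsFinset.image Equiv.Perm.support) : 2 ≤ B.card := by
  simp only [Finset.mem_image] at hB
  obtain ⟨c, hc, rfl⟩ := hB
  exact (Equiv.Perm.mem_cycleFactorsFinset_iff.mp hc).1.two_le_card_support

lemma DCA.inv_disj (σ : Equiv.Perm (Fin K)) :
    ((σ.cycleFactorsFinset.image Equiv.Perm.support : Finset (Finset (Fin K))) :
      Set (Finset (Fin K))).PairwiseDisjoint id := by
  intro B hB C hC hne
  simp only [Finset.coe_image, Set.mem_image, Finset.mem_coe] at hB hC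
  obtain ⟨c, hc, rfl⟩ := hB
  obtain ⟨c', hc', rfl⟩ := hC
  have hcc' : c ≠ c' := fun h => hne (by rw [h])
  have := σ.cycleFactorsFinset_pairwise_disjoint hc hc' hcc'
  exact this.disjoint_support

lemma DCA.inv_union {σ : Equiv.Perm (Fin K)} (hσ : σ.support = Finset.univ) :
    (σ.cycleFactorsFinset.image Equiv.Perm.support).biUnion id = Finset.univ := by
  ext a
  simp only [Finset.mem_biUnion, Finset.mem_univ, iff_true, id]
  have haσ : a ∈ σ.support := by rw [hσ]; exact Finset.mem_univ a
  refine ⟨(σ.cycleOf a).support, Finset.mem_image_of_mem _ ?_, ?_⟩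
  · exact Equiv.Perm.cycleOf_mem_cycleFactorsFinset_iff.mpr haσ
  · rw [Equiv.Perm.mem_support_cycleOf_iff]
    exact ⟨Equiv.Perm.SameCycle.refl _ _, haσ⟩

lemma DCA.inv_p (σ : Equiv.Perm (Fin K)) {B : Finset (Fin K)}
    (hB : B ∈ σ.cycleFactorsFinset.image Equiv.Perm.support) :
    (σ.cycleOf (B.min' (DCA.inv_nonempty hB))).IsCycle ∧
      (σ.cycleOf (B.min' (DCA.inv_nonempty hB))).support = B := by
  obtain ⟨c, hc, hcB⟩ := Finset.mem_image.mp hB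
  have ha : B.min' (DCA.inv_nonempty hB) ∈ c.support := by
    rw [hcB]; exact B.min'_mem _
  have hco : c = σ.cycleOf (B.min' (DCA.inv_nonempty hB)) :=
    Equiv.Perm.cycle_is_cycleOf ha hc
  rw [← hco]
  exact ⟨(Equiv.Perm.mem_cycleFactorsFinset_iff.mp hc).1, hcB⟩

lemma DCA.inv_noncommProd (σ : Equiv.Perm (Fin K)) (hσ : σ.support = Finset.univ) (comm) :
    (σ.cycleFactorsFinset.image Equiv.Perm.support).attach.noncommProd
      (fun B => σ.cycleOf (B.1.min' (DCA.inv_nonempty B.2))) comm = σ := by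
  ext a
  have haσ : a ∈ σ.support := by rw [hσ]; exact Finset.mem_univ a
  have hc : σ.cycleOf a ∈ σ.cycleFactorsFinset :=
    Equiv.Perm.cycleOf_mem_cycleFactorsFinset_iff.mpr haσ
  have hB : (σ.cycleOf a).support ∈ σ.cycleFactorsFinset.image Equiv.Perm.support :=
    Finset.mem_image_of_mem _ hc
  have ha : a ∈ (σ.cycleOf a).support := by
    rw [Equiv.Perm.mem_support_cycleOf_iff]
    exact ⟨Equiv.Perm.SameCycle.refl _ _, haσ⟩
  rw [DCA.apply_fwd (DCA.inv_disj σ) (fun B hB => DCA.inv_p σ hB) comm hB ha]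
  have hmin : (σ.cycleOf a).support.min' (DCA.inv_nonempty hB) ∈ (σ.cycleOf a).support :=
    Finset.min'_mem _ _
  have : σ.cycleOf a = σ.cycleOf ((σ.cycleOf a).support.min' (DCA.inv_nonempty hB)) :=
    Equiv.Perm.cycle_is_cycleOf hmin hc
  rw [← this, Equiv.Perm.cycleOf_apply_self]

end Inv

lemma DCA.heq_pi {γ δ : Type*} {s s' : Finset γ} (h : s = s')
    (f : ∀ B ∈ s, δ) (g : ∀ B ∈ s', δ)
    (hfg : ∀ B (hB : B ∈ s) (hB' : B ∈ s'), f B hB = g B hB') : HEq f g := by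
  subst h
  exact heq_of_eq (by funext B hB; exact hfg B hB hB)

/-- for a K×K matrix `A` with zero diagonal over a commutative ring,
`det A = Σ_π Π_{B ∈ π} ( (−1)^{|B|+1} Σ_σ Π_{i ∈ B} A_{i,σ(i)} )`, where the outer sum
is over set partitions `π` of `{1,…,K}` all of whose blocks have at least two elements,
and the inner sum is over permutations that are cyclic on the block `B` (i.e. cycles
with support exactly `B`). -/
theorem det_zero_diagonal_cycle_expansion {R : Type*} [CommRing R]
    (K : ℕ) (hK : 1 ≤ K) (A : Matrix (Fin K) (Fin K) R)
    (hA : ∀ i, A i i = 0) :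
    A.det =
      ∑ P ∈ Finset.univ.filter (fun P : Finset (Finset (Fin K)) =>
          (∀ B ∈ P, 2 ≤ B.card) ∧
          (P : Set (Finset (Fin K))).PairwiseDisjoint id ∧
          P.biUnion id = Finset.univ),
        ∏ B ∈ P,
          ((-1 : R) ^ (B.card + 1) *
            ∑ σ ∈ Finset.univ.filter
                (fun σ : Equiv.Perm (Fin K) => σ.IsCycle ∧ σ.support = B),
              ∏ i ∈ B, A i (σ i)) := by
  classical
  -- Step 1: determinant as a sum over fixed-point-free permutations
  have detA : A.det = ∑ σ ∈ Finset.univ.filter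
      (fun σ : Equiv.Perm (Fin K) => σ.support = Finset.univ),
      ((Equiv.Perm.sign σ : ℤ) : R) * ∏ i, A i (σ i) := by
    rw [← Matrix.det_transpose, Matrix.det_apply']
    rw [← Finset.sum_filter_add_sum_filter_not Finset.univ
      (fun σ : Equiv.Perm (Fin K) => σ.support = Finset.univ)]
    have hz : ∀ σ ∈ Finset.univ.filter
        (fun σ : Equiv.Perm (Fin K) => ¬ σ.support = Finset.univ),
        ((Equiv.Perm.sign σ : ℤ) : R) * ∏ i, A.transpose (σ i) i = 0 := by
      intro σ hσ
      simp only [Finset.mem_filter, Finset.mem_univ, true_and] at hσ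
      have hex : ∃ i, σ i = i := by
        by_contra h
        push_neg at h
        exact hσ (by ext i; simpa [Equiv.Perm.mem_support] using h i)
      obtain ⟨i, hi⟩ := hex
      have h0 : A.transpose (σ i) i = 0 := by rw [Matrix.transpose_apply, hi, hA]
      exact mul_eq_zero_of_right _ (Finset.prod_eq_zero (Finset.mem_univ i) h0)
    rw [Finset.sum_eq_zero hz, add_zero]
    exact Finset.sum_congr rfl fun σ _ => by simp [Matrix.transpose_apply]
  -- Step 2: rewrite each partition summand as a sum over `Finset.pi`
  have rhs1 : ∀ P : Finset (Finset (Fin K)),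
      (∏ B ∈ P, ((-1 : R) ^ (B.card + 1) *
        ∑ σ ∈ Finset.univ.filter
          (fun σ : Equiv.Perm (Fin K) => σ.IsCycle ∧ σ.support = B),
          ∏ i ∈ B, A i (σ i)))
      = ∑ p ∈ P.pi (fun B => Finset.univ.filter
            (fun σ : Equiv.Perm (Fin K) => σ.IsCycle ∧ σ.support = B)),
          ∏ B ∈ P.attach,
            ((-1 : R) ^ (B.1.card + 1) * ∏ i ∈ B.1, A i (p B.1 B.2 i)) := by
    intro P
    exact (Finset.prod_congr rfl fun B _ => Finset.mul_sum _ _ _).trans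
      (Finset.prod_sum _ _ _)
  rw [detA]
  rw [Finset.sum_congr rfl fun P _ => rhs1 P]
  rw [Finset.sum_sigma']
  refine Finset.sum_bij'
    (i := fun (σ : Equiv.Perm (Fin K)) (hσ : σ ∈ Finset.univ.filter
        (fun σ : Equiv.Perm (Fin K) => σ.support = Finset.univ)) =>
      (⟨σ.cycleFactorsFinset.image Equiv.Perm.support,
        fun B hB => σ.cycleOf (B.min' (DCA.inv_nonempty hB))⟩ :
        Σ P : Finset (Finset (Fin K)), ∀ B ∈ P, Equiv.Perm (Fin K)))
    (j := fun x hx => x.1.attach.noncommProd (fun B => x.2 B.1 B.2) (by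
      simp only [Finset.mem_sigma, Finset.mem_filter, Finset.mem_univ, true_and,
        Finset.mem_pi] at hx
      refine (DCA.pair hx.1.2.1 ?_).imp fun _ _ hd => hd.commute
      intro B hB
      have h3 := hx.2 B hB
      exact h3))
    ?_ ?_ ?_ ?_ ?_
  · -- hi
    intro σ hσ
    simp only [Finset.mem_filter, Finset.mem_univ, true_and] at hσ
    simp only [Finset.mem_sigma, Finset.mem_filter, Finset.mem_univ, true_and, Finset.mem_pi]
    refine ⟨⟨fun B hB => DCA.inv_card hB, DCA.inv_disj σ, DCA.inv_union hσ⟩, ?_⟩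
    intro B hB
    exact DCA.inv_p σ hB
  · -- hj
    rintro ⟨P, p⟩ hx
    simp only [Finset.mem_sigma, Finset.mem_filter, Finset.mem_univ, true_and,
      Finset.mem_pi] at hx
    obtain ⟨⟨hcard, hdisj, hunion⟩, hpi⟩ := hx
    have hp : ∀ B (hB : B ∈ P), (p B hB).IsCycle ∧ (p B hB).support = B := by
      intro B hB
      have h3 := hpi B hB
      exact h3
    simp only [Finset.mem_filter, Finset.mem_univ, true_and]
    exact (DCA.support_fwd hdisj hp _).trans hunion
  · -- left_inv
    intro σ hσ
    simp only [Finset.mem_filter, Finset.mem_univ, true_and] at hσ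
    exact DCA.inv_noncommProd σ hσ _
  · -- right_inv
    rintro ⟨P, p⟩ hx
    simp only [Finset.mem_sigma, Finset.mem_filter, Finset.mem_univ, true_and,
      Finset.mem_pi] at hx
    obtain ⟨⟨hcard, hdisj, hunion⟩, hpi⟩ := hx
    have hp : ∀ B (hB : B ∈ P), (p B hB).IsCycle ∧ (p B hB).support = B := by
      intro B hB
      have h3 := hpi B hB
      exact h3
    have h1 : (((P.attach.noncommProd (fun B => p B.1 B.2)
        ((DCA.pair hdisj hp).imp fun _ _ hd => hd.commute)).cycleFactorsFinset).image
        Equiv.Perm.support) = P := DCA.factors_image hdisj hp _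
    refine Sigma.ext h1 (DCA.heq_pi h1 _ _ ?_)
    intro B hB hB'
    have hmem := DCA.mem_factors hdisj hp
      ((DCA.pair hdisj hp).imp fun _ _ hd => hd.commute) hB'
    have ha : B.min' (DCA.inv_nonempty hB) ∈ (p B hB').support := by
      rw [(hp B hB').2]; exact B.min'_mem _
    exact (Equiv.Perm.cycle_is_cycleOf ha hmem).symm
  · -- terms
    intro σ hσ
    simp only [Finset.mem_filter, Finset.mem_univ, true_and] at hσ
    have comm := (DCA.pair (DCA.inv_disj σ) (fun B hB => DCA.inv_p σ hB)).imp
      fun _ _ hd => Equiv.Perm.Disjoint.commute hd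
    have hσ' := DCA.inv_noncommProd σ hσ comm
    have key : ∀ (B : Finset (Fin K)) (hB : B ∈ σ.cycleFactorsFinset.image Equiv.Perm.support)
        (i : Fin K), i ∈ B → σ.cycleOf (B.min' (DCA.inv_nonempty hB)) i = σ i := by
      intro B hB i hi
      have h2 := DCA.apply_fwd (DCA.inv_disj σ) (fun B hB => DCA.inv_p σ hB) comm hB hi
      rw [hσ'] at h2
      exact h2.symm
    rw [Finset.prod_mul_distrib]
    congr 1
    · have hs := DCA.sign_fwd (R := R) (DCA.inv_disj σ) (fun B hB => DCA.inv_p σ hB) comm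
      rw [hσ'] at hs
      rw [hs]
      exact (Finset.prod_attach _ _).symm
    · calc ∏ i, A i (σ i)
          = ∏ i ∈ (σ.cycleFactorsFinset.image Equiv.Perm.support).biUnion id, A i (σ i) := by
            rw [DCA.inv_union hσ]
        _ = ∏ B ∈ σ.cycleFactorsFinset.image Equiv.Perm.support, ∏ i ∈ B, A i (σ i) :=
            Finset.prod_biUnion (DCA.inv_disj σ)
        _ = ∏ B ∈ (σ.cycleFactorsFinset.image Equiv.Perm.support).attach,
              ∏ i ∈ B.1, A i (σ i) := (Finset.prod_attach _ _).symm
        _ = ∏ B ∈ (σ.cycleFactorsFinset.image Equiv.Perm.support).attach,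
              ∏ i ∈ B.1, A i (σ.cycleOf (B.1.min' (DCA.inv_nonempty B.2)) i) :=
            Finset.prod_congr rfl fun B _ => Finset.prod_congr rfl fun i hi => by
              rw [key B.1 B.2 i hi]
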